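/- Let h : ℝ → ℝ be strictly convex and differentiable at a point c ∈ ℝ, set T = h'(c). Let W : ℝ → ℝ be a 1-periodic, even, Lipschitz function with Lipschitz constant 1, and let ε, τ > 0. Let u, v ∈ ℝ with v ≤ u and u, v < c; let u' be a global minimizer over ℝ of t ↦ h(t) + ε·W(t/ε) + (1/(2τ))(t − u)² and v' a global minimizer over ℝ of t ↦ T·t + ε·W(t/ε) + (1/(2τ))(t − v)². If moreover u' < c and v' < c, then v' ≤ u'. -/
import Mathlib


theorem stmt_4 (h : ℝ → ℝ) (hconv : StrictConvexOn ℝ Set.univ h)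
    (c T : ℝ) (hT : HasDerivAt h T c)
    (W : ℝ → ℝ) (hper : Function.Periodic W 1) (heven : ∀ x : ℝ, W (-x) = W x)
    (hlip : LipschitzWith 1 W)
    (ε τ : ℝ) (hε : 0 < ε) (hτ : 0 < τ)
    (u v : ℝ) (hvu : v ≤ u) (huc : u < c) (hvc : v < c)
    (u' v' : ℝ)
    (hu' : ∀ t : ℝ, h u' + ε * W (u' / ε) + 1 / (2 * τ) * (u' - u) ^ 2 ≤
      h t + ε * W (t / ε) + 1 / (2 * τ) * (t - u) ^ 2)
    (hv' : ∀ t : ℝ, T * v' + ε * W (v' / ε) + 1 / (2 * τ) * (v' - v) ^ 2 ≤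
      T * t + ε * W (t / ε) + 1 / (2 * τ) * (t - v) ^ 2)
    (hu'c : u' < c) (hv'c : v' < c) :
    v' ≤ u' := by
  by_contra hlt
  push_neg at hlt
  have h1 := hu' v'
  have h2 := hv' u'
  have hs1 : (h v' - h u') / (v' - u') < (h c - h v') / (c - v') :=
    hconv.slope_strict_mono_adjacent (Set.mem_univ _) (Set.mem_univ _) hlt hv'c
  have hs2 : slope h v' c ≤ T :=
    hconv.convexOn.slope_le_of_hasDerivAt (Set.mem_univ _) (Set.mem_univ _) hv'c hT
  rw [slope_def_field] at hs2
  have hsec : (h v' - h u') / (v' - u') < T := lt_of_lt_of_le hs1 hs2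
  have hd : 0 < v' - u' := sub_pos.mpr hlt
  have key : h v' - h u' < T * (v' - u') := by
    have := (div_lt_iff₀ hd).mp hsec
    linarith
  have hτ' : 0 < 1 / (2 * τ) := by positivity
  nlinarith [h1, h2, key, mul_nonneg hτ'.le (mul_nonneg (sub_nonneg.mpr hvu) hd.le)]
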